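/- arXiv:0910.2095 — 4 statements merged into one kernel-verified Lean document; each statement's English description precedes it below -/
import Mathlib

section
/- Suppose ε is continuous with 1 < ε(z) ≤ E on γ = [−2πδ, 2πδ], q₀ = 2πδκ/cos φ satisfies (E − 1)q₀ < 1, p > 0, and t₀ = q₀(E − 1 + 3αp²) < 1. Then for U, V in the closed ball of radius p of C(γ), the operator T(U) = −AU + αF(U) + f (with A and F the integral operators with kernel k(t) = (iκ/(2cosφ))e^{2iκcos(φ)|t|} weighted by (1 − ε) and the cubic nonlinearity respectively) satisfies ‖T(U) − T(V)‖ ≤ t₀‖U − V‖. -/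
lemma ker_norm (κ c : ℝ) (hκ : 0 < κ) (hc : 0 < c) (t : ℝ) :
    ‖(Complex.I * κ / (2 * (c:ℂ))) * Complex.exp (2 * Complex.I * κ * c * (|t| : ℝ))‖
      = κ / (2 * c) := by
  rw [norm_mul, norm_div, norm_mul, Complex.norm_I, one_mul]
  simp [Complex.norm_exp, Complex.mul_re, Complex.mul_im,
    abs_of_pos hκ, abs_of_pos hc]

lemma cube_diff (u v : ℂ) (p M : ℝ) (hu : ‖u‖ ≤ p) (hv : ‖v‖ ≤ p) (hM : ‖u - v‖ ≤ M) :
    ‖((‖u‖ ^ 2 : ℝ) : ℂ) * u - ((‖v‖ ^ 2 : ℝ) : ℂ) * v‖ ≤ 3 * p ^ 2 * M := by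
  have key : ((‖u‖ ^ 2 : ℝ) : ℂ) * u - ((‖v‖ ^ 2 : ℝ) : ℂ) * v
      = ((‖u‖ ^ 2 : ℝ) : ℂ) * (u - v) + ((‖u‖ ^ 2 - ‖v‖ ^ 2 : ℝ) : ℂ) * v := by
    push_cast; ring
  rw [key]
  have h1 : ‖((‖u‖ ^ 2 : ℝ) : ℂ) * (u - v)‖ = ‖u‖ ^ 2 * ‖u - v‖ := by
    rw [norm_mul, Complex.norm_real, Real.norm_eq_abs, abs_of_nonneg (by positivity)]
  have h2 : ‖((‖u‖ ^ 2 - ‖v‖ ^ 2 : ℝ) : ℂ) * v‖ = |‖u‖ ^ 2 - ‖v‖ ^ 2| * ‖v‖ := by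
    rw [norm_mul, Complex.norm_real, Real.norm_eq_abs]
  have habs : |‖u‖ - ‖v‖| ≤ ‖u - v‖ := abs_norm_sub_norm_le u v
  have habs2 : |‖u‖ ^ 2 - ‖v‖ ^ 2| = |‖u‖ - ‖v‖| * (‖u‖ + ‖v‖) := by
    rw [← abs_of_nonneg (by positivity : (0:ℝ) ≤ ‖u‖ + ‖v‖), ← abs_mul]
    ring_nf
  have h0 : 0 ≤ M := le_trans (norm_nonneg _) hM
  have hp0 : 0 ≤ p := (norm_nonneg u).trans hu
  have e1 : ‖u‖ ^ 2 * ‖u - v‖ ≤ p ^ 2 * M :=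
    mul_le_mul (pow_le_pow_left₀ (norm_nonneg u) hu 2) hM (norm_nonneg _) (by positivity)
  have hd : |‖u‖ - ‖v‖| ≤ M := habs.trans hM
  have e2 : |‖u‖ - ‖v‖| * (‖u‖ + ‖v‖) * ‖v‖ ≤ M * (2 * p) * p := by
    have hsum : ‖u‖ + ‖v‖ ≤ 2 * p := by linarith
    gcongr
  calc ‖((‖u‖ ^ 2 : ℝ) : ℂ) * (u - v) + ((‖u‖ ^ 2 - ‖v‖ ^ 2 : ℝ) : ℂ) * v‖
      ≤ ‖u‖ ^ 2 * ‖u - v‖ + |‖u‖ ^ 2 - ‖v‖ ^ 2| * ‖v‖ := by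
        rw [← h1, ← h2]; exact norm_add_le _ _
    _ ≤ 3 * p ^ 2 * M := by rw [habs2]; nlinarith

/-- Contraction estimate: for `U, V` in the closed ball of radius `p` of `C(γ)`,
`‖T(U) − T(V)‖ ≤ t₀‖U − V‖` where `t₀ = q₀(E − 1 + 3αp²) < 1`. -/
theorem stmt_7 (δ κ φ E α p : ℝ) (hδ : 0 < δ) (hκ : 0 < κ) (hφ : |φ| < Real.pi / 2)
    (hE : 1 < E) (hα : 0 < α) (hp : 0 < p)
    (q₀ : ℝ) (hq₀ : q₀ = 2 * Real.pi * δ * κ / Real.cos φ)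
    (hq1 : (E - 1) * q₀ < 1)
    (ht₀ : q₀ * (E - 1 + 3 * α * p ^ 2) < 1)
    (ε : ℝ → ℝ) (hε : Continuous ε)
    (hεb : ∀ z ∈ Set.Icc (-(2 * Real.pi * δ)) (2 * Real.pi * δ), 1 < ε z ∧ ε z ≤ E)
    (f : ℝ → ℂ)
    (U V : ℝ → ℂ) (hU : Continuous U) (hV : Continuous V)
    (hUp : ∀ z ∈ Set.Icc (-(2 * Real.pi * δ)) (2 * Real.pi * δ), ‖U z‖ ≤ p)
    (hVp : ∀ z ∈ Set.Icc (-(2 * Real.pi * δ)) (2 * Real.pi * δ), ‖V z‖ ≤ p)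
    (M : ℝ)
    (hM : ∀ z ∈ Set.Icc (-(2 * Real.pi * δ)) (2 * Real.pi * δ), ‖U z - V z‖ ≤ M) :
    ∀ z ∈ Set.Icc (-(2 * Real.pi * δ)) (2 * Real.pi * δ),
      ‖(-(∫ z₀ in (-(2 * Real.pi * δ))..(2 * Real.pi * δ),
            (Complex.I * κ / (2 * Real.cos φ)) *
              Complex.exp (2 * Complex.I * κ * Real.cos φ * |z - z₀|) *
              ((1 - ε z₀ : ℝ) : ℂ) * U z₀)
          + α * (∫ z₀ in (-(2 * Real.pi * δ))..(2 * Real.pi * δ),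
              (Complex.I * κ / (2 * Real.cos φ)) *
                Complex.exp (2 * Complex.I * κ * Real.cos φ * |z - z₀|) *
                ((‖U z₀‖ ^ 2 : ℝ) : ℂ) * U z₀)
          + f z)
        - (-(∫ z₀ in (-(2 * Real.pi * δ))..(2 * Real.pi * δ),
              (Complex.I * κ / (2 * Real.cos φ)) *
                Complex.exp (2 * Complex.I * κ * Real.cos φ * |z - z₀|) *
                ((1 - ε z₀ : ℝ) : ℂ) * V z₀)
            + α * (∫ z₀ in (-(2 * Real.pi * δ))..(2 * Real.pi * δ),
                (Complex.I * κ / (2 * Real.cos φ)) *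
                  Complex.exp (2 * Complex.I * κ * Real.cos φ * |z - z₀|) *
                  ((‖V z₀‖ ^ 2 : ℝ) : ℂ) * V z₀)
            + f z)‖ ≤
      q₀ * (E - 1 + 3 * α * p ^ 2) * M := by
  intro z hz
  set a : ℝ := 2 * Real.pi * δ with ha
  have ha0 : 0 < a := by positivity
  have hcos : 0 < Real.cos φ := Real.cos_pos_of_mem_Ioo
    ⟨by rcases abs_lt.mp hφ with ⟨h1, _⟩; linarith, (abs_lt.mp hφ).2⟩
  have hM0 : 0 ≤ M := le_trans (norm_nonneg _) (hM a ⟨by linarith, le_refl a⟩)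
  set K : ℝ := κ / (2 * Real.cos φ) with hK
  have hK0 : 0 < K := by positivity
  -- kernel abbreviation and norm
  set ker : ℝ → ℂ := fun z₀ => Complex.I * κ / (2 * Real.cos φ) *
      Complex.exp (2 * Complex.I * κ * Real.cos φ * |z - z₀|) with hker
  have hkernorm : ∀ z₀ : ℝ, ‖ker z₀‖ = K :=
    fun z₀ => ker_norm κ (Real.cos φ) hκ hcos (z - z₀)
  have hkercont : Continuous ker := by
    apply continuous_const.mul
    exact Complex.continuous_exp.comp (continuous_const.mul
      (Complex.continuous_ofReal.comp ((continuous_const.sub continuous_id).abs)))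
  -- integrability
  have hi1U : IntervalIntegrable (fun z₀ => ker z₀ * ((1 - ε z₀ : ℝ) : ℂ) * U z₀)
      MeasureTheory.volume (-a) a :=
    ((hkercont.mul ((Complex.continuous_ofReal.comp (continuous_const.sub hε)))).mul hU).intervalIntegrable _ _
  have hi1V : IntervalIntegrable (fun z₀ => ker z₀ * ((1 - ε z₀ : ℝ) : ℂ) * V z₀)
      MeasureTheory.volume (-a) a :=
    ((hkercont.mul ((Complex.continuous_ofReal.comp (continuous_const.sub hε)))).mul hV).intervalIntegrable _ _
  have hi2U : IntervalIntegrable (fun z₀ => ker z₀ * ((‖U z₀‖ ^ 2 : ℝ) : ℂ) * U z₀)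
      MeasureTheory.volume (-a) a :=
    ((hkercont.mul (Complex.continuous_ofReal.comp ((hU.norm).pow 2))).mul hU).intervalIntegrable _ _
  have hi2V : IntervalIntegrable (fun z₀ => ker z₀ * ((‖V z₀‖ ^ 2 : ℝ) : ℂ) * V z₀)
      MeasureTheory.volume (-a) a :=
    ((hkercont.mul (Complex.continuous_ofReal.comp ((hV.norm).pow 2))).mul hV).intervalIntegrable _ _
  -- name the four integrals
  set I1U := ∫ z₀ in (-a)..a, ker z₀ * ((1 - ε z₀ : ℝ) : ℂ) * U z₀ with hI1U
  set I1V := ∫ z₀ in (-a)..a, ker z₀ * ((1 - ε z₀ : ℝ) : ℂ) * V z₀ with hI1V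
  set I2U := ∫ z₀ in (-a)..a, ker z₀ * ((‖U z₀‖ ^ 2 : ℝ) : ℂ) * U z₀ with hI2U
  set I2V := ∫ z₀ in (-a)..a, ker z₀ * ((‖V z₀‖ ^ 2 : ℝ) : ℂ) * V z₀ with hI2V
  have hgoalrw : (-I1U + α * I2U + f z) - (-I1V + α * I2V + f z)
      = (I1V - I1U) + (α : ℂ) * (I2U - I2V) := by ring
  have huIoc : Set.uIoc (-a) a ⊆ Set.Icc (-a) a := by
    rw [Set.uIoc_of_le (by linarith : -a ≤ a)]
    exact Set.Ioc_subset_Icc_self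
  -- bound first difference
  have hb1 : ‖I1V - I1U‖ ≤ K * ((E - 1) * M) * (2 * a) := by
    rw [hI1V, hI1U, ← intervalIntegral.integral_sub hi1V hi1U]
    have := intervalIntegral.norm_integral_le_of_norm_le_const (a := -a) (b := a)
      (C := K * ((E - 1) * M))
      (f := fun z₀ => ker z₀ * ((1 - ε z₀ : ℝ) : ℂ) * V z₀ - ker z₀ * ((1 - ε z₀ : ℝ) : ℂ) * U z₀)
      ?_
    · calc ‖∫ z₀ in (-a)..a, (ker z₀ * ((1 - ε z₀ : ℝ) : ℂ) * V z₀ - ker z₀ * ((1 - ε z₀ : ℝ) : ℂ) * U z₀)‖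
          ≤ K * ((E - 1) * M) * |a - -a| := this
        _ = K * ((E - 1) * M) * (2 * a) := by rw [abs_of_pos (by linarith : (0:ℝ) < a - -a)]; ring
    · intro x hx
      have hxI := huIoc hx
      have hfac : ker x * ((1 - ε x : ℝ) : ℂ) * V x - ker x * ((1 - ε x : ℝ) : ℂ) * U x
          = ker x * (((1 - ε x : ℝ) : ℂ) * (V x - U x)) := by ring
      beta_reduce
      rw [hfac, norm_mul, hkernorm, norm_mul, Complex.norm_real, Real.norm_eq_abs]
      have hε1 := (hεb x hxI).1
      have hε2 := (hεb x hxI).2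
      have habs : |1 - ε x| ≤ E - 1 := by rw [abs_of_nonpos (by linarith)]; linarith
      have hVU : ‖V x - U x‖ ≤ M := by rw [norm_sub_rev]; exact hM x hxI
      have : |1 - ε x| * ‖V x - U x‖ ≤ (E - 1) * M :=
        mul_le_mul habs hVU (norm_nonneg _) (by linarith)
      exact mul_le_mul_of_nonneg_left this hK0.le
  -- bound second difference
  have hb2 : ‖I2U - I2V‖ ≤ K * (3 * p ^ 2 * M) * (2 * a) := by
    rw [hI2U, hI2V, ← intervalIntegral.integral_sub hi2U hi2V]
    have := intervalIntegral.norm_integral_le_of_norm_le_const (a := -a) (b := a)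
      (C := K * (3 * p ^ 2 * M))
      (f := fun z₀ => ker z₀ * ((‖U z₀‖ ^ 2 : ℝ) : ℂ) * U z₀ - ker z₀ * ((‖V z₀‖ ^ 2 : ℝ) : ℂ) * V z₀)
      ?_
    · calc ‖∫ z₀ in (-a)..a, (ker z₀ * ((‖U z₀‖ ^ 2 : ℝ) : ℂ) * U z₀ - ker z₀ * ((‖V z₀‖ ^ 2 : ℝ) : ℂ) * V z₀)‖
          ≤ K * (3 * p ^ 2 * M) * |a - -a| := this
        _ = K * (3 * p ^ 2 * M) * (2 * a) := by rw [abs_of_pos (by linarith : (0:ℝ) < a - -a)]; ring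
    · intro x hx
      have hxI := huIoc hx
      have hfac : ker x * ((‖U x‖ ^ 2 : ℝ) : ℂ) * U x - ker x * ((‖V x‖ ^ 2 : ℝ) : ℂ) * V x
          = ker x * (((‖U x‖ ^ 2 : ℝ) : ℂ) * U x - ((‖V x‖ ^ 2 : ℝ) : ℂ) * V x) := by ring
      beta_reduce
      rw [hfac, norm_mul, hkernorm]
      exact mul_le_mul_of_nonneg_left
        (cube_diff (U x) (V x) p M (hUp x hxI) (hVp x hxI) (hM x hxI)) hK0.le
  -- combine
  calc ‖(-I1U + α * I2U + f z) - (-I1V + α * I2V + f z)‖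
      = ‖(I1V - I1U) + (α : ℂ) * (I2U - I2V)‖ := by rw [hgoalrw]
    _ ≤ ‖I1V - I1U‖ + ‖(α : ℂ)‖ * ‖I2U - I2V‖ := by
        refine (norm_add_le _ _).trans ?_
        rw [norm_mul]
    _ ≤ K * ((E - 1) * M) * (2 * a) + α * (K * (3 * p ^ 2 * M) * (2 * a)) := by
        have hnα : ‖(α : ℂ)‖ = α := by
          rw [Complex.norm_real, Real.norm_eq_abs, abs_of_pos hα]
        rw [hnα]
        exact add_le_add hb1 (mul_le_mul_of_nonneg_left hb2 hα.le)
    _ = q₀ * (E - 1 + 3 * α * p ^ 2) * M := by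
        rw [hq₀, hK, ha]
        field_simp
end

section
/- Under the hypotheses: ε continuous with 1 < ε(z) ≤ E on γ = [−2πδ, 2πδ], q₀ = 2πδκ/cos φ with (E−1)q₀ < 1, a√(αq₀) < (2/(3√3))(1 − (E−1)q₀)^{3/2}, p ∈ (p₁, p₂) (where p₁ < p₂ are the positive zeros of αq₀p³ − (1−(E−1)q₀)p + a), and q₀(E − 1 + 3αp²) < 1, the map T(U) = −AU + αF(U) + f maps the closed ball S_p of C(γ) into itself and is a contraction, hence has a unique fixed point U* in S_p. -/
open MeasureTheory intervalIntegral Set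

lemma aux_ker_norm (κ c : ℝ) (hκ : 0 < κ) (hc : 0 < c) (t : ℝ) :
    ‖(Complex.I * κ / (2 * c)) * Complex.exp (2 * Complex.I * κ * c * (t:ℂ))‖ = κ / (2*c) := by
  simp [map_mul, map_div₀, Complex.norm_exp, Complex.norm_real,
    abs_of_pos hκ, abs_of_pos hc]

lemma aux_f_norm (a κ c t : ℝ) (ha : 0 < a) :
    ‖(a:ℂ) * Complex.exp (-Complex.I * κ * c * (t:ℂ))‖ = a := by
  simp [map_mul, Complex.norm_exp, Complex.norm_real, abs_of_pos ha]

lemma aux_cubic_diff (p : ℝ) (u v : ℂ) (hu : ‖u‖ ≤ p) (hv : ‖v‖ ≤ p) :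
    ‖((‖u‖^2 : ℝ):ℂ) * u - ((‖v‖^2 : ℝ):ℂ) * v‖ ≤ 3 * p^2 * ‖u - v‖ := by
  have hp : 0 ≤ p := le_trans (norm_nonneg u) hu
  have key : ((‖u‖^2 : ℝ):ℂ) * u - ((‖v‖^2 : ℝ):ℂ) * v
      = ((‖u‖^2 : ℝ):ℂ) * (u - v) + (((‖u‖^2 - ‖v‖^2 : ℝ)):ℂ) * v := by push_cast; ring
  rw [key]
  have h1 : ‖((‖u‖^2 : ℝ):ℂ) * (u - v)‖ ≤ p^2 * ‖u - v‖ := by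
    rw [norm_mul, Complex.norm_real, Real.norm_eq_abs,
      abs_of_nonneg (by positivity : (0:ℝ) ≤ ‖u‖^2)]
    gcongr
  have h2 : ‖(((‖u‖^2 - ‖v‖^2 : ℝ)):ℂ) * v‖ ≤ 2 * p * ‖u - v‖ * p := by
    rw [norm_mul, Complex.norm_real, Real.norm_eq_abs]
    have hd : |‖u‖ - ‖v‖| ≤ ‖u - v‖ := abs_norm_sub_norm_le u v
    have hsq : |‖u‖^2 - ‖v‖^2| ≤ 2 * p * ‖u - v‖ := by
      have he : |‖u‖^2 - ‖v‖^2| = |‖u‖ - ‖v‖| * |‖u‖ + ‖v‖| := by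
        rw [← abs_mul]; ring_nf
      rw [he]
      have h3 : |‖u‖ + ‖v‖| ≤ 2 * p := by
        rw [abs_of_nonneg (by positivity)]; linarith
      calc |‖u‖ - ‖v‖| * |‖u‖ + ‖v‖| ≤ ‖u - v‖ * (2*p) :=
            mul_le_mul hd h3 (abs_nonneg _) (norm_nonneg _)
        _ = 2 * p * ‖u - v‖ := by ring
    calc |‖u‖^2 - ‖v‖^2| * ‖v‖ ≤ (2 * p * ‖u - v‖) * p :=
          mul_le_mul hsq hv (norm_nonneg _) (by positivity)
      _ = 2 * p * ‖u - v‖ * p := by ring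
  calc ‖_ + _‖ ≤ _ := norm_add_le _ _
    _ ≤ p^2 * ‖u - v‖ + 2 * p * ‖u - v‖ * p := add_le_add h1 h2
    _ = 3 * p^2 * ‖u - v‖ := by ring

lemma aux_cubic_neg (α q₀ a E p p₁ p₂ : ℝ) (hα : 0 < α) (hq0 : 0 < q₀)
    (hp₁ : 0 < p₁) (hp12 : p₁ < p₂)
    (hz₁ : α * q₀ * p₁ ^ 3 - (1 - (E - 1) * q₀) * p₁ + a = 0)
    (hz₂ : α * q₀ * p₂ ^ 3 - (1 - (E - 1) * q₀) * p₂ + a = 0)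
    (hpl : p₁ < p) (hpr : p < p₂) :
    α * q₀ * p ^ 3 - (1 - (E - 1) * q₀) * p + a ≤ 0 := by
  have h2 : (p₁ - p₂) * (α*q₀*(p₁^2+p₁*p₂+p₂^2) - (1-(E-1)*q₀)) = 0 := by
    linear_combination hz₁ - hz₂
  have hne : p₁ - p₂ ≠ 0 := by linarith
  have hc : α*q₀*(p₁^2+p₁*p₂+p₂^2) - (1-(E-1)*q₀) = 0 := by
    rcases mul_eq_zero.1 h2 with h | h
    · exact absurd h hne
    · exact h
  have hA : a = α*q₀*(p₁^2*p₂+p₁*p₂^2) := by linear_combination hz₁ - p₁ * hc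
  have hfac : 0 ≤ (p - p₁)*(p₂ - p)*(p + p₁ + p₂) :=
    mul_nonneg (mul_nonneg (by linarith) (by linarith)) (by linarith)
  nlinarith [mul_nonneg (mul_pos hα hq0).le hfac]

lemma aux_int_bound (κ c L C : ℝ) (g h : ℝ → ℂ) (z : ℝ) (hκ : 0 < κ) (hc : 0 < c)
    (hL : 0 ≤ L) (hgh : ∀ z₀ ∈ Set.Icc (-L) L, ‖g z₀ * h z₀‖ ≤ C) :
    ‖∫ z₀ in (-L)..L, (Complex.I * κ / (2 * c)) *
        Complex.exp (2 * Complex.I * κ * c * (|z - z₀| : ℝ)) * g z₀ * h z₀‖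
      ≤ L * κ / c * C := by
  have hb := intervalIntegral.norm_integral_le_of_norm_le_const
    (a := -L) (b := L) (C := κ/(2*c) * C)
    (f := fun z₀ => (Complex.I * κ / (2 * c)) *
        Complex.exp (2 * Complex.I * κ * c * (|z - z₀| : ℝ)) * g z₀ * h z₀) ?_
  · calc _ ≤ κ/(2*c) * C * |L - (-L)| := hb
      _ = L * κ / c * C := by
          rw [show L - (-L) = 2*L by ring, abs_of_nonneg (by linarith)]
          field_simp
  · intro x hx
    have hx' : x ∈ Set.Icc (-L) L := by
      rw [Set.uIoc_of_le (by linarith : -L ≤ L)] at hx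
      exact Set.Ioc_subset_Icc_self hx
    rw [mul_assoc _ (g x) (h x), norm_mul, aux_ker_norm κ c hκ hc]
    exact mul_le_mul_of_nonneg_left (hgh x hx') (by positivity)

lemma aux_cont (κ c L : ℝ) (g h : ℝ → ℂ) (hg : Continuous g) (hh : Continuous h) :
    Continuous fun z => ∫ z₀ in (-L)..L, (Complex.I * κ / (2 * c)) *
        Complex.exp (2 * Complex.I * κ * c * (|z - z₀| : ℝ)) * g z₀ * h z₀ := by
  apply intervalIntegral.continuous_parametric_intervalIntegral_of_continuous'
    (f := fun z z₀ => (Complex.I * κ / (2 * c)) *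
        Complex.exp (2 * Complex.I * κ * c * (|z - z₀| : ℝ)) * g z₀ * h z₀)
  apply Continuous.mul
  apply Continuous.mul
  apply Continuous.mul continuous_const
  · exact Complex.continuous_exp.comp (by fun_prop)
  · exact hg.comp continuous_snd
  · exact hh.comp continuous_snd

lemma aux_integrable (κ c L : ℝ) (hL : -L ≤ L) (g h : ℝ → ℂ)
    (hg : ContinuousOn g (Set.Icc (-L) L)) (hh : ContinuousOn h (Set.Icc (-L) L)) (z : ℝ) :
    IntervalIntegrable (fun z₀ => (Complex.I * κ / (2 * c)) *
        Complex.exp (2 * Complex.I * κ * c * (|z - z₀| : ℝ)) * g z₀ * h z₀)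
      MeasureTheory.volume (-L) L := by
  apply ContinuousOn.intervalIntegrable
  rw [Set.uIcc_of_le hL]
  apply ContinuousOn.mul _ hh
  apply ContinuousOn.mul _ hg
  apply Continuous.continuousOn
  exact continuous_const.mul (Complex.continuous_exp.comp (by fun_prop))

/-- The nonlinear operator `T(U) = −AU + αF(U) + f` of the diffraction problem, with
kernel `k(t) = (iκ/(2cosφ))e^{2iκcos(φ)|t|}`, weight `1 − ε`, Kerr cubic nonlinearity,
and incident field `f(z) = a·e^{−iκcosφ(z−2πδ)}`. -/
noncomputable def Tmap (δ κ α a φ : ℝ) (ε : ℝ → ℝ) (U : ℝ → ℂ) (z : ℝ) : ℂ :=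
  -(∫ z₀ in (-(2 * Real.pi * δ))..(2 * Real.pi * δ),
      (Complex.I * κ / (2 * Real.cos φ)) *
        Complex.exp (2 * Complex.I * κ * Real.cos φ * |z - z₀|) *
        ((1 - ε z₀ : ℝ) : ℂ) * U z₀)
  + α * (∫ z₀ in (-(2 * Real.pi * δ))..(2 * Real.pi * δ),
      (Complex.I * κ / (2 * Real.cos φ)) *
        Complex.exp (2 * Complex.I * κ * Real.cos φ * |z - z₀|) *
        ((‖U z₀‖ ^ 2 : ℝ) : ℂ) * U z₀)
  + a * Complex.exp (-Complex.I * κ * Real.cos φ * (z - 2 * Real.pi * δ))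

set_option maxHeartbeats 2000000 in
/-- Under the stated conditions, `T` maps the closed ball `S_p` of `C(γ)` into itself,
is a contraction there, and hence has a unique fixed point `U*` in `S_p`. -/
theorem stmt_8 (δ κ α a E φ : ℝ)
    (hδ : 0 < δ) (hκ : 0 < κ) (hα : 0 < α) (ha : 0 < a) (hE : 1 < E)
    (hφ : |φ| < Real.pi / 2)
    (q₀ : ℝ) (hq₀ : q₀ = 2 * Real.pi * δ * κ / Real.cos φ)
    (ε : ℝ → ℝ) (hε : Continuous ε)
    (hεb : ∀ z ∈ Set.Icc (-(2 * Real.pi * δ)) (2 * Real.pi * δ), 1 < ε z ∧ ε z ≤ E)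
    (hq1 : (E - 1) * q₀ < 1)
    (hsmall : a * Real.sqrt (α * q₀) <
      (2 / (3 * Real.sqrt 3)) * (1 - (E - 1) * q₀) ^ ((3 : ℝ) / 2))
    (p₁ p₂ p : ℝ) (hp₁ : 0 < p₁) (hp12 : p₁ < p₂)
    (hz₁ : α * q₀ * p₁ ^ 3 - (1 - (E - 1) * q₀) * p₁ + a = 0)
    (hz₂ : α * q₀ * p₂ ^ 3 - (1 - (E - 1) * q₀) * p₂ + a = 0)
    (hp : p ∈ Set.Ioo p₁ p₂)
    (ht₀ : q₀ * (E - 1 + 3 * α * p ^ 2) < 1) :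
    (∀ U : ℝ → ℂ, ContinuousOn U (Set.Icc (-(2 * Real.pi * δ)) (2 * Real.pi * δ)) →
      (∀ z ∈ Set.Icc (-(2 * Real.pi * δ)) (2 * Real.pi * δ), ‖U z‖ ≤ p) →
      ∀ z ∈ Set.Icc (-(2 * Real.pi * δ)) (2 * Real.pi * δ), ‖Tmap δ κ α a φ ε U z‖ ≤ p) ∧
    (∀ U V : ℝ → ℂ,
      ContinuousOn U (Set.Icc (-(2 * Real.pi * δ)) (2 * Real.pi * δ)) →
      ContinuousOn V (Set.Icc (-(2 * Real.pi * δ)) (2 * Real.pi * δ)) →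
      (∀ z ∈ Set.Icc (-(2 * Real.pi * δ)) (2 * Real.pi * δ), ‖U z‖ ≤ p) →
      (∀ z ∈ Set.Icc (-(2 * Real.pi * δ)) (2 * Real.pi * δ), ‖V z‖ ≤ p) →
      ∀ M : ℝ, (∀ z ∈ Set.Icc (-(2 * Real.pi * δ)) (2 * Real.pi * δ), ‖U z - V z‖ ≤ M) →
      ∀ z ∈ Set.Icc (-(2 * Real.pi * δ)) (2 * Real.pi * δ),
        ‖Tmap δ κ α a φ ε U z - Tmap δ κ α a φ ε V z‖ ≤
          q₀ * (E - 1 + 3 * α * p ^ 2) * M) ∧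
    (∃ U : ℝ → ℂ, ContinuousOn U (Set.Icc (-(2 * Real.pi * δ)) (2 * Real.pi * δ)) ∧
      (∀ z ∈ Set.Icc (-(2 * Real.pi * δ)) (2 * Real.pi * δ), ‖U z‖ ≤ p) ∧
      (∀ z ∈ Set.Icc (-(2 * Real.pi * δ)) (2 * Real.pi * δ), U z = Tmap δ κ α a φ ε U z) ∧
      ∀ V : ℝ → ℂ, ContinuousOn V (Set.Icc (-(2 * Real.pi * δ)) (2 * Real.pi * δ)) →
        (∀ z ∈ Set.Icc (-(2 * Real.pi * δ)) (2 * Real.pi * δ), ‖V z‖ ≤ p) →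
        (∀ z ∈ Set.Icc (-(2 * Real.pi * δ)) (2 * Real.pi * δ), V z = Tmap δ κ α a φ ε V z) →
        ∀ z ∈ Set.Icc (-(2 * Real.pi * δ)) (2 * Real.pi * δ), V z = U z) := by
  have hcos : 0 < Real.cos φ :=
    Real.cos_pos_of_mem_Ioo ⟨(abs_lt.1 hφ).1, (abs_lt.1 hφ).2⟩
  have hpi := Real.pi_pos
  have hLpos : 0 < 2 * Real.pi * δ := by positivity
  have hLL : -(2 * Real.pi * δ) ≤ 2 * Real.pi * δ := by linarith
  have hq0pos : 0 < q₀ := by rw [hq₀]; positivity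
  obtain ⟨hpl, hpr⟩ := hp
  have hppos : 0 < p := lt_trans hp₁ hpl
  have hqeq : 2 * Real.pi * δ * κ / Real.cos φ * 1 = q₀ * 1 := by rw [hq₀]
  have hLq : ∀ C : ℝ, 2 * Real.pi * δ * κ / Real.cos φ * C = q₀ * C := by
    intro C; rw [hq₀]
  -- Part 1 : self-map
  have part1 : ∀ U : ℝ → ℂ,
      ContinuousOn U (Set.Icc (-(2 * Real.pi * δ)) (2 * Real.pi * δ)) →
      (∀ z ∈ Set.Icc (-(2 * Real.pi * δ)) (2 * Real.pi * δ), ‖U z‖ ≤ p) →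
      ∀ z ∈ Set.Icc (-(2 * Real.pi * δ)) (2 * Real.pi * δ), ‖Tmap δ κ α a φ ε U z‖ ≤ p := by
    intro U hU hUp z hz
    have hI1 : ‖∫ z₀ in (-(2 * Real.pi * δ))..(2 * Real.pi * δ),
        (Complex.I * κ / (2 * Real.cos φ)) *
          Complex.exp (2 * Complex.I * κ * Real.cos φ * |z - z₀|) *
          ((1 - ε z₀ : ℝ) : ℂ) * U z₀‖ ≤ q₀ * ((E - 1) * p) := by
      rw [← hLq ((E-1)*p)]
      apply aux_int_bound κ (Real.cos φ) _ _ _ _ z hκ hcos hLpos.le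
      intro z₀ hz₀
      rw [norm_mul, Complex.norm_real, Real.norm_eq_abs]
      have h1 := (hεb z₀ hz₀).1
      have h2 := (hεb z₀ hz₀).2
      have : |1 - ε z₀| ≤ E - 1 := by rw [abs_of_nonpos (by linarith)]; linarith
      exact mul_le_mul this (hUp z₀ hz₀) (norm_nonneg _) (by linarith)
    have hI2 : ‖∫ z₀ in (-(2 * Real.pi * δ))..(2 * Real.pi * δ),
        (Complex.I * κ / (2 * Real.cos φ)) *
          Complex.exp (2 * Complex.I * κ * Real.cos φ * |z - z₀|) *
          ((‖U z₀‖ ^ 2 : ℝ) : ℂ) * U z₀‖ ≤ q₀ * (p^3) := by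
      rw [← hLq (p^3)]
      apply aux_int_bound κ (Real.cos φ) _ _ _ _ z hκ hcos hLpos.le
      intro z₀ hz₀
      rw [norm_mul, Complex.norm_real, Real.norm_eq_abs,
        abs_of_nonneg (by positivity : (0:ℝ) ≤ ‖U z₀‖^2)]
      calc ‖U z₀‖^2 * ‖U z₀‖ ≤ p^2 * p := by
            have h := hUp z₀ hz₀
            have h0 : (0:ℝ) ≤ ‖U z₀‖ := norm_nonneg _
            exact mul_le_mul (pow_le_pow_left₀ h0 h 2) h h0 (by positivity)
        _ = p^3 := by ring
    have hf : ‖(a:ℂ) * Complex.exp (-Complex.I * κ * Real.cos φ *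
        ((z:ℂ) - 2 * Real.pi * δ))‖ = a := by
      rw [show ((z:ℂ) - 2 * Real.pi * δ) = ((z - 2 * Real.pi * δ : ℝ) : ℂ) by push_cast; ring]
      exact aux_f_norm a κ (Real.cos φ) _ ha
    have hcubic := aux_cubic_neg α q₀ a E p p₁ p₂ hα hq0pos hp₁ hp12 hz₁ hz₂ hpl hpr
    calc ‖Tmap δ κ α a φ ε U z‖ ≤ ‖-(∫ z₀ in (-(2 * Real.pi * δ))..(2 * Real.pi * δ),
          (Complex.I * κ / (2 * Real.cos φ)) *
            Complex.exp (2 * Complex.I * κ * Real.cos φ * |z - z₀|) *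
            ((1 - ε z₀ : ℝ) : ℂ) * U z₀)‖
        + ‖(α:ℂ) * ∫ z₀ in (-(2 * Real.pi * δ))..(2 * Real.pi * δ),
          (Complex.I * κ / (2 * Real.cos φ)) *
            Complex.exp (2 * Complex.I * κ * Real.cos φ * |z - z₀|) *
            ((‖U z₀‖ ^ 2 : ℝ) : ℂ) * U z₀‖
        + ‖(a:ℂ) * Complex.exp (-Complex.I * κ * Real.cos φ * ((z:ℂ) - 2 * Real.pi * δ))‖ := by
          apply norm_add₃_le
      _ ≤ q₀ * ((E - 1) * p) + α * (q₀ * p^3) + a := by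
          rw [norm_neg, norm_mul, Complex.norm_real, Real.norm_eq_abs, abs_of_pos hα, hf]
          have := mul_le_mul_of_nonneg_left hI2 hα.le
          linarith
      _ ≤ p := by nlinarith
  -- Part 2 : contraction estimate
  have part2 : ∀ U V : ℝ → ℂ,
      ContinuousOn U (Set.Icc (-(2 * Real.pi * δ)) (2 * Real.pi * δ)) →
      ContinuousOn V (Set.Icc (-(2 * Real.pi * δ)) (2 * Real.pi * δ)) →
      (∀ z ∈ Set.Icc (-(2 * Real.pi * δ)) (2 * Real.pi * δ), ‖U z‖ ≤ p) →
      (∀ z ∈ Set.Icc (-(2 * Real.pi * δ)) (2 * Real.pi * δ), ‖V z‖ ≤ p) →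
      ∀ M : ℝ, (∀ z ∈ Set.Icc (-(2 * Real.pi * δ)) (2 * Real.pi * δ), ‖U z - V z‖ ≤ M) →
      ∀ z ∈ Set.Icc (-(2 * Real.pi * δ)) (2 * Real.pi * δ),
        ‖Tmap δ κ α a φ ε U z - Tmap δ κ α a φ ε V z‖ ≤
          q₀ * (E - 1 + 3 * α * p ^ 2) * M := by
    intro U V hU hV hUp hVp M hM z hz
    have hM0 : 0 ≤ M :=
      le_trans (norm_nonneg _) (hM 0 ⟨by linarith, by linarith⟩)
    have hεc : ContinuousOn (fun z₀ => ((1 - ε z₀ : ℝ) : ℂ))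
        (Set.Icc (-(2 * Real.pi * δ)) (2 * Real.pi * δ)) := by fun_prop
    have hUsq : ContinuousOn (fun z₀ => ((‖U z₀‖ ^ 2 : ℝ) : ℂ))
        (Set.Icc (-(2 * Real.pi * δ)) (2 * Real.pi * δ)) := by fun_prop
    have hVsq : ContinuousOn (fun z₀ => ((‖V z₀‖ ^ 2 : ℝ) : ℂ))
        (Set.Icc (-(2 * Real.pi * δ)) (2 * Real.pi * δ)) := by fun_prop
    have iAU := aux_integrable κ (Real.cos φ) _ hLL _ U hεc hU z
    have iAV := aux_integrable κ (Real.cos φ) _ hLL _ V hεc hV z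
    have iFU := aux_integrable κ (Real.cos φ) _ hLL _ U hUsq hU z
    have iFV := aux_integrable κ (Real.cos φ) _ hLL _ V hVsq hV z
    have eA : (∫ z₀ in (-(2 * Real.pi * δ))..(2 * Real.pi * δ),
          (Complex.I * κ / (2 * Real.cos φ)) *
            Complex.exp (2 * Complex.I * κ * Real.cos φ * |z - z₀|) *
            ((1 - ε z₀ : ℝ) : ℂ) * U z₀)
        - (∫ z₀ in (-(2 * Real.pi * δ))..(2 * Real.pi * δ),
          (Complex.I * κ / (2 * Real.cos φ)) *
            Complex.exp (2 * Complex.I * κ * Real.cos φ * |z - z₀|) *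
            ((1 - ε z₀ : ℝ) : ℂ) * V z₀)
        = ∫ z₀ in (-(2 * Real.pi * δ))..(2 * Real.pi * δ),
          (Complex.I * κ / (2 * Real.cos φ)) *
            Complex.exp (2 * Complex.I * κ * Real.cos φ * |z - z₀|) *
            ((1 - ε z₀ : ℝ) : ℂ) * (U z₀ - V z₀) := by
      rw [← intervalIntegral.integral_sub iAU iAV]
      apply intervalIntegral.integral_congr
      intro x hx; simp only []; ring
    have eF : (∫ z₀ in (-(2 * Real.pi * δ))..(2 * Real.pi * δ),
          (Complex.I * κ / (2 * Real.cos φ)) *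
            Complex.exp (2 * Complex.I * κ * Real.cos φ * |z - z₀|) *
            ((‖U z₀‖ ^ 2 : ℝ) : ℂ) * U z₀)
        - (∫ z₀ in (-(2 * Real.pi * δ))..(2 * Real.pi * δ),
          (Complex.I * κ / (2 * Real.cos φ)) *
            Complex.exp (2 * Complex.I * κ * Real.cos φ * |z - z₀|) *
            ((‖V z₀‖ ^ 2 : ℝ) : ℂ) * V z₀)
        = ∫ z₀ in (-(2 * Real.pi * δ))..(2 * Real.pi * δ),
          (Complex.I * κ / (2 * Real.cos φ)) *
            Complex.exp (2 * Complex.I * κ * Real.cos φ * |z - z₀|) *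
            (1 : ℂ) * (((‖U z₀‖ ^ 2 : ℝ) : ℂ) * U z₀ - ((‖V z₀‖ ^ 2 : ℝ) : ℂ) * V z₀) := by
      rw [← intervalIntegral.integral_sub iFU iFV]
      apply intervalIntegral.integral_congr
      intro x hx; simp only []; ring
    have hI1 : ‖∫ z₀ in (-(2 * Real.pi * δ))..(2 * Real.pi * δ),
          (Complex.I * κ / (2 * Real.cos φ)) *
            Complex.exp (2 * Complex.I * κ * Real.cos φ * |z - z₀|) *
            ((1 - ε z₀ : ℝ) : ℂ) * (U z₀ - V z₀)‖ ≤ q₀ * ((E - 1) * M) := by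
      rw [← hLq ((E-1)*M)]
      apply aux_int_bound κ (Real.cos φ) _ _ _ _ z hκ hcos hLpos.le
      intro z₀ hz₀
      rw [norm_mul, Complex.norm_real, Real.norm_eq_abs]
      have h1 := (hεb z₀ hz₀).1
      have h2 := (hεb z₀ hz₀).2
      have : |1 - ε z₀| ≤ E - 1 := by rw [abs_of_nonpos (by linarith)]; linarith
      exact mul_le_mul this (hM z₀ hz₀) (norm_nonneg _) (by linarith)
    have hI2 : ‖∫ z₀ in (-(2 * Real.pi * δ))..(2 * Real.pi * δ),
          (Complex.I * κ / (2 * Real.cos φ)) *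
            Complex.exp (2 * Complex.I * κ * Real.cos φ * |z - z₀|) *
            (1 : ℂ) * (((‖U z₀‖ ^ 2 : ℝ) : ℂ) * U z₀ - ((‖V z₀‖ ^ 2 : ℝ) : ℂ) * V z₀)‖
        ≤ q₀ * (3 * p^2 * M) := by
      rw [← hLq (3*p^2*M)]
      apply aux_int_bound κ (Real.cos φ) _ _ _ _ z hκ hcos hLpos.le
      intro z₀ hz₀
      rw [one_mul]
      calc ‖((‖U z₀‖ ^ 2 : ℝ) : ℂ) * U z₀ - ((‖V z₀‖ ^ 2 : ℝ) : ℂ) * V z₀‖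
          ≤ 3 * p^2 * ‖U z₀ - V z₀‖ := aux_cubic_diff p _ _ (hUp z₀ hz₀) (hVp z₀ hz₀)
        _ ≤ 3 * p^2 * M := by
            apply mul_le_mul_of_nonneg_left (hM z₀ hz₀) (by positivity)
    have key : Tmap δ κ α a φ ε U z - Tmap δ κ α a φ ε V z
        = -((∫ z₀ in (-(2 * Real.pi * δ))..(2 * Real.pi * δ),
          (Complex.I * κ / (2 * Real.cos φ)) *
            Complex.exp (2 * Complex.I * κ * Real.cos φ * |z - z₀|) *
            ((1 - ε z₀ : ℝ) : ℂ) * U z₀)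
          - (∫ z₀ in (-(2 * Real.pi * δ))..(2 * Real.pi * δ),
          (Complex.I * κ / (2 * Real.cos φ)) *
            Complex.exp (2 * Complex.I * κ * Real.cos φ * |z - z₀|) *
            ((1 - ε z₀ : ℝ) : ℂ) * V z₀))
        + (α:ℂ) * ((∫ z₀ in (-(2 * Real.pi * δ))..(2 * Real.pi * δ),
          (Complex.I * κ / (2 * Real.cos φ)) *
            Complex.exp (2 * Complex.I * κ * Real.cos φ * |z - z₀|) *
            ((‖U z₀‖ ^ 2 : ℝ) : ℂ) * U z₀)
          - (∫ z₀ in (-(2 * Real.pi * δ))..(2 * Real.pi * δ),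
          (Complex.I * κ / (2 * Real.cos φ)) *
            Complex.exp (2 * Complex.I * κ * Real.cos φ * |z - z₀|) *
            ((‖V z₀‖ ^ 2 : ℝ) : ℂ) * V z₀)) := by
      simp only [Tmap]; ring
    rw [key, eA, eF]
    calc ‖_‖ ≤ ‖-(∫ z₀ in (-(2 * Real.pi * δ))..(2 * Real.pi * δ),
          (Complex.I * κ / (2 * Real.cos φ)) *
            Complex.exp (2 * Complex.I * κ * Real.cos φ * |z - z₀|) *
            ((1 - ε z₀ : ℝ) : ℂ) * (U z₀ - V z₀))‖
        + ‖(α:ℂ) * ∫ z₀ in (-(2 * Real.pi * δ))..(2 * Real.pi * δ),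
          (Complex.I * κ / (2 * Real.cos φ)) *
            Complex.exp (2 * Complex.I * κ * Real.cos φ * |z - z₀|) *
            (1 : ℂ) * (((‖U z₀‖ ^ 2 : ℝ) : ℂ) * U z₀ - ((‖V z₀‖ ^ 2 : ℝ) : ℂ) * V z₀)‖ :=
          norm_add_le _ _
      _ ≤ q₀ * ((E - 1) * M) + α * (q₀ * (3 * p^2 * M)) := by
          rw [norm_neg, norm_mul, Complex.norm_real, Real.norm_eq_abs, abs_of_pos hα]
          have := mul_le_mul_of_nonneg_left hI2 hα.le
          linarith
      _ = q₀ * (E - 1 + 3 * α * p ^ 2) * M := by ring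
  refine ⟨part1, part2, ?_⟩
  -- Part 3 : Banach fixed point
  have hTcont : ∀ W : ℝ → ℂ, Continuous W → Continuous (Tmap δ κ α a φ ε W) := by
    intro W hW
    unfold Tmap
    apply Continuous.add
    apply Continuous.add
    · exact (aux_cont κ (Real.cos φ) (2 * Real.pi * δ)
        (fun z₀ => ((1 - ε z₀ : ℝ) : ℂ)) W (by fun_prop) hW).neg
    · exact continuous_const.mul (aux_cont κ (Real.cos φ) (2 * Real.pi * δ)
        (fun z₀ => ((‖W z₀‖ ^ 2 : ℝ) : ℂ)) W (by fun_prop) hW)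
    · fun_prop
  have hTcongr : ∀ W W' : ℝ → ℂ,
      Set.EqOn W W' (Set.Icc (-(2 * Real.pi * δ)) (2 * Real.pi * δ)) →
      ∀ z, Tmap δ κ α a φ ε W z = Tmap δ κ α a φ ε W' z := by
    intro W W' hWW z
    have e1 : (∫ z₀ in (-(2 * Real.pi * δ))..(2 * Real.pi * δ),
        (Complex.I * κ / (2 * Real.cos φ)) *
          Complex.exp (2 * Complex.I * κ * Real.cos φ * |z - z₀|) *
          ((1 - ε z₀ : ℝ) : ℂ) * W z₀)
        = ∫ z₀ in (-(2 * Real.pi * δ))..(2 * Real.pi * δ),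
        (Complex.I * κ / (2 * Real.cos φ)) *
          Complex.exp (2 * Complex.I * κ * Real.cos φ * |z - z₀|) *
          ((1 - ε z₀ : ℝ) : ℂ) * W' z₀ := by
      apply intervalIntegral.integral_congr
      intro x hx
      rw [Set.uIcc_of_le hLL] at hx
      simp only [hWW hx]
    have e2 : (∫ z₀ in (-(2 * Real.pi * δ))..(2 * Real.pi * δ),
        (Complex.I * κ / (2 * Real.cos φ)) *
          Complex.exp (2 * Complex.I * κ * Real.cos φ * |z - z₀|) *
          ((‖W z₀‖ ^ 2 : ℝ) : ℂ) * W z₀)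
        = ∫ z₀ in (-(2 * Real.pi * δ))..(2 * Real.pi * δ),
        (Complex.I * κ / (2 * Real.cos φ)) *
          Complex.exp (2 * Complex.I * κ * Real.cos φ * |z - z₀|) *
          ((‖W' z₀‖ ^ 2 : ℝ) : ℂ) * W' z₀ := by
      apply intervalIntegral.integral_congr
      intro x hx
      rw [Set.uIcc_of_le hLL] at hx
      simp only [hWW hx]
    unfold Tmap
    rw [e1, e2]
  -- the closed ball in C(γ, ℂ)
  let ext : C(↥(Set.Icc (-(2 * Real.pi * δ)) (2 * Real.pi * δ)), ℂ) → ℝ → ℂ :=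
    fun u => Set.IccExtend hLL ⇑u
  have hext_cont : ∀ u, Continuous (ext u) := fun u => u.continuous.Icc_extend'
  have hext_eq : ∀ u, ∀ z, ∀ hz : z ∈ Set.Icc (-(2 * Real.pi * δ)) (2 * Real.pi * δ),
      ext u z = u ⟨z, hz⟩ := fun u z hz => Set.IccExtend_of_mem hLL _ hz
  have hbnd : ∀ u : C(↥(Set.Icc (-(2 * Real.pi * δ)) (2 * Real.pi * δ)), ℂ), ‖u‖ ≤ p →
      ∀ z ∈ Set.Icc (-(2 * Real.pi * δ)) (2 * Real.pi * δ), ‖ext u z‖ ≤ p := by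
    intro u hu z hz
    rw [hext_eq u z hz]
    exact le_trans (ContinuousMap.norm_coe_le_norm u _) hu
  haveI : CompleteSpace
      ↥(Metric.closedBall (0 : C(↥(Set.Icc (-(2 * Real.pi * δ)) (2 * Real.pi * δ)), ℂ)) p) :=
    Metric.isClosed_closedBall.completeSpace_coe
  haveI : Nonempty
      ↥(Metric.closedBall (0 : C(↥(Set.Icc (-(2 * Real.pi * δ)) (2 * Real.pi * δ)), ℂ)) p) :=
    ⟨⟨0, Metric.mem_closedBall.2 (by simpa using hppos.le)⟩⟩
  let Φ : ↥(Metric.closedBall (0 : C(↥(Set.Icc (-(2 * Real.pi * δ)) (2 * Real.pi * δ)), ℂ)) p) →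
      ↥(Metric.closedBall (0 : C(↥(Set.Icc (-(2 * Real.pi * δ)) (2 * Real.pi * δ)), ℂ)) p) :=
    fun u => ⟨⟨fun t => Tmap δ κ α a φ ε (ext u.1) ↑t,
        (hTcont _ (hext_cont u.1)).comp continuous_subtype_val⟩,
      mem_closedBall_zero_iff.2 ((ContinuousMap.norm_le _ hppos.le).2 (fun t =>
        part1 (ext u.1) (hext_cont u.1).continuousOn
          (hbnd u.1 (mem_closedBall_zero_iff.1 u.2)) ↑t t.2))⟩
  have hKnn : (0:ℝ) ≤ q₀ * (E - 1 + 3 * α * p ^ 2) := by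
    have h3 : (0:ℝ) < 3 * α * p ^ 2 := by positivity
    nlinarith
  have hcontr : ContractingWith ⟨q₀ * (E - 1 + 3 * α * p ^ 2), hKnn⟩ Φ := by
    constructor
    · exact_mod_cast ht₀
    · apply LipschitzWith.of_dist_le_mul
      intro u v
      rw [Subtype.dist_eq]
      rw [ContinuousMap.dist_le (by positivity)]
      intro t
      rw [dist_eq_norm]
      have hMz : ∀ z ∈ Set.Icc (-(2 * Real.pi * δ)) (2 * Real.pi * δ),
          ‖ext u.1 z - ext v.1 z‖ ≤ dist u v := by
        intro z hz
        rw [hext_eq _ z hz, hext_eq _ z hz, ← dist_eq_norm]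
        calc dist (u.1 ⟨z, hz⟩) (v.1 ⟨z, hz⟩) ≤ dist u.1 v.1 :=
              ContinuousMap.dist_apply_le_dist _
          _ = dist u v := (Subtype.dist_eq u v).symm
      exact part2 (ext u.1) (ext v.1) (hext_cont _).continuousOn (hext_cont _).continuousOn
        (hbnd _ (mem_closedBall_zero_iff.1 u.2)) (hbnd _ (mem_closedBall_zero_iff.1 v.2))
        (dist u v) hMz ↑t t.2
  set x := ContractingWith.fixedPoint Φ hcontr with hxdef
  have hxfix : Φ x = x := hcontr.fixedPoint_isFixedPt
  refine ⟨ext x.1, (hext_cont _).continuousOn,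
    hbnd x.1 (mem_closedBall_zero_iff.1 x.2), ?_, ?_⟩
  · intro z hz
    have h1 : (Φ x).1 ⟨z, hz⟩ = x.1 ⟨z, hz⟩ := by rw [hxfix]
    rw [hext_eq x.1 z hz]
    exact h1.symm
  · intro V hV hVp hVfix z hz
    have hvmem : (⟨fun t => V ↑t, hV.restrict⟩ :
        C(↥(Set.Icc (-(2 * Real.pi * δ)) (2 * Real.pi * δ)), ℂ)) ∈
        Metric.closedBall (0 : C(↥(Set.Icc (-(2 * Real.pi * δ)) (2 * Real.pi * δ)), ℂ)) p :=
      mem_closedBall_zero_iff.2 ((ContinuousMap.norm_le _ hppos.le).2 (fun t => hVp ↑t t.2))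
    set v : ↥(Metric.closedBall
        (0 : C(↥(Set.Icc (-(2 * Real.pi * δ)) (2 * Real.pi * δ)), ℂ)) p) :=
      ⟨⟨fun t => V ↑t, hV.restrict⟩, hvmem⟩ with hvdef
    have hextv : Set.EqOn (ext v.1) V
        (Set.Icc (-(2 * Real.pi * δ)) (2 * Real.pi * δ)) := by
      intro z' hz'
      rw [hext_eq _ z' hz']
      rfl
    have hvfix : Φ v = v := by
      apply Subtype.ext
      apply ContinuousMap.ext
      intro t
      show Tmap δ κ α a φ ε (ext v.1) ↑t = V ↑t
      rw [hTcongr _ V hextv ↑t]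
      exact (hVfix ↑t t.2).symm
    have hvx : v = x := hcontr.fixedPoint_unique hvfix
    rw [hext_eq x.1 z hz, ← hvx]
    rfl
end

section
/- Let k(t) = s₀e^{2ib|t|} with s₀ = iκ/(2cosφ), b = κcosφ, d = 2πδ. For U₀(z) = ã e^{−ibz} and weight η⁽⁰⁾(z) = T e^{iqz} with q ≠ −b and q ≠ 3b, the integral ∫_{−d}^{d} k(z − z₀) η⁽⁰⁾(z₀) U₀(z₀) dz₀ equals H₁e^{−2ibz} + H₂e^{2ibz} + H₃e^{i(q−b)z}, where H_j = H₀·H̃_j with H₀ = −iTã s₀ / ((b+q)(3b−q)), H̃₁ = (3b−q)e^{id(b+q)}, H̃₂ = (b+q)e^{id(3b−q)}, H̃₃ = −4b. -/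
lemma alg (s T a B Q u v w x : ℂ)
    (h1 : B + Q ≠ 0) (h2 : 3 * B - Q ≠ 0) (h3 : Q - 3 * B ≠ 0) (h4 : Q + B ≠ 0)
    (hu : u ≠ 0) (hx : x ≠ 0) :
    s * T * a * u ^ 2 * (-Complex.I * ((v / u ^ 3 - w ^ 3 / x) / (Q - 3 * B))) +
      s * T * a * (u ^ 2)⁻¹ * (-Complex.I * ((x * w - v * u) / (Q + B))) =
    -(Complex.I * T * a * s) / ((B + Q) * (3 * B - Q)) * ((3 * B - Q) * (x * w)) * (u ^ 2)⁻¹ +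
      -(Complex.I * T * a * s) / ((B + Q) * (3 * B - Q)) * ((B + Q) * (w ^ 3 / x)) * u ^ 2 +
      -(Complex.I * T * a * s) / ((B + Q) * (3 * B - Q)) * (-4 * B) * (v / u) := by
  have e1 : s * T * a * u ^ 2 * (-Complex.I * ((v / u ^ 3) / (Q - 3 * B))) +
      s * T * a * (u ^ 2)⁻¹ * (-Complex.I * ((-(v * u)) / (Q + B))) =
      -(Complex.I * T * a * s) / ((B + Q) * (3 * B - Q)) * (-4 * B) * (v / u) := by
    field_simp
    ring
  have e2 : s * T * a * u ^ 2 * (-Complex.I * ((-(w ^ 3 / x)) / (Q - 3 * B))) =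
      -(Complex.I * T * a * s) / ((B + Q) * (3 * B - Q)) * ((B + Q) * (w ^ 3 / x)) * u ^ 2 := by
    field_simp
    ring
  have e3 : s * T * a * (u ^ 2)⁻¹ * (-Complex.I * ((x * w) / (Q + B))) =
      -(Complex.I * T * a * s) / ((B + Q) * (3 * B - Q)) * ((3 * B - Q) * (x * w)) * (u ^ 2)⁻¹ := by
    have h2' : B * 3 - Q ≠ 0 := by rwa [mul_comm] at h2
    field_simp
    ring
  linear_combination e1 + e2 + e3

lemma div_I_mul (X g : ℂ) : X / (Complex.I * g) = -Complex.I * (X / g) := by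
  rw [mul_comm, ← div_div, div_eq_mul_inv (X / g), Complex.inv_I]
  ring

lemma exp_combine (s T a A B C : ℂ) :
    s * Complex.exp A * (T * Complex.exp B) * (a * Complex.exp C)
      = s * T * a * Complex.exp (A + B + C) := by
  rw [Complex.exp_add, Complex.exp_add]; ring

/-- Lemma 1: explicit image of `U₀(z) = atil e^{−ibz}` weighted by `η⁽⁰⁾(z) = T e^{iqz}`
under the integral operator with kernel `k(t) = s₀e^{2ib|t|}`, for `q ≠ −b, q ≠ 3b`. -/
theorem stmt_12 (κ δ φ : ℝ) (hκ : 0 < κ) (hδ : 0 < δ) (hφ : |φ| < Real.pi / 2)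
    (b d : ℝ) (hb : b = κ * Real.cos φ) (hd : d = 2 * Real.pi * δ)
    (s₀ : ℂ) (hs₀ : s₀ = Complex.I * κ / (2 * Real.cos φ))
    (atil T : ℂ) (q : ℝ) (hq1 : q ≠ -b) (hq2 : q ≠ 3 * b)
    (z : ℝ) (hz : z ∈ Set.Icc (-d) d) :
    (∫ z₀ in (-d)..d,
        s₀ * Complex.exp (2 * Complex.I * b * |z - z₀|) *
          (T * Complex.exp (Complex.I * q * z₀)) *
          (atil * Complex.exp (-Complex.I * b * z₀))) =
      (-(Complex.I * T * atil * s₀) / (((b : ℂ) + q) * (3 * b - q))) *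
          ((3 * (b : ℂ) - q) * Complex.exp (Complex.I * d * (b + q))) *
          Complex.exp (-2 * Complex.I * b * z)
        + (-(Complex.I * T * atil * s₀) / (((b : ℂ) + q) * (3 * b - q))) *
            (((b : ℂ) + q) * Complex.exp (Complex.I * d * (3 * b - q))) *
            Complex.exp (2 * Complex.I * b * z)
        + (-(Complex.I * T * atil * s₀) / (((b : ℂ) + q) * (3 * b - q))) * (-4 * b) *
            Complex.exp (Complex.I * (q - b) * z) := by
  obtain ⟨hz1, hz2⟩ := hz
  have hbq1 : ((b : ℂ) + q) ≠ 0 := by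
    intro h
    apply hq1
    have : (b : ℝ) + q = 0 := by exact_mod_cast h
    linarith
  have hbq2 : (3 * (b : ℂ) - q) ≠ 0 := by
    intro h
    apply hq2
    have : 3 * (b : ℝ) - q = 0 := by exact_mod_cast h
    linarith
  set c₁ : ℂ := Complex.I * ((q : ℂ) - 3 * b) with hc₁
  set c₂ : ℂ := Complex.I * ((q : ℂ) + b) with hc₂
  have hc₁0 : c₁ ≠ 0 := by
    refine mul_ne_zero Complex.I_ne_zero ?_
    intro h; apply hbq2; linear_combination -h
  have hc₂0 : c₂ ≠ 0 := by
    refine mul_ne_zero Complex.I_ne_zero ?_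
    intro h; apply hbq1; linear_combination h
  set K : ℂ := s₀ * T * atil with hK
  -- integrability
  have hcont : ∀ a' b' : ℝ, IntervalIntegrable (fun z₀ : ℝ =>
      s₀ * Complex.exp (2 * Complex.I * b * |z - z₀|) *
        (T * Complex.exp (Complex.I * q * z₀)) *
        (atil * Complex.exp (-Complex.I * b * z₀))) MeasureTheory.volume a' b' := by
    intro a' b'
    apply Continuous.intervalIntegrable
    fun_prop
  have hsplit := intervalIntegral.integral_add_adjacent_intervals (hcont (-d) z) (hcont z d)
  rw [← hsplit]
  have e1 : (∫ z₀ in (-d)..z,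
      s₀ * Complex.exp (2 * Complex.I * b * |z - z₀|) *
        (T * Complex.exp (Complex.I * q * z₀)) *
        (atil * Complex.exp (-Complex.I * b * z₀)))
      = K * Complex.exp (2 * Complex.I * b * z) *
          ((Complex.exp (c₁ * z) - Complex.exp (c₁ * ((-d : ℝ) : ℂ))) / c₁) := by
    rw [← integral_exp_mul_complex hc₁0, ← intervalIntegral.integral_const_mul]
    apply intervalIntegral.integral_congr
    intro z₀ hz₀
    rw [Set.uIcc_of_le (by linarith)] at hz₀
    have habs : |z - z₀| = z - z₀ := abs_of_nonneg (by have := hz₀.2; linarith)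
    simp only [habs]
    push_cast
    rw [exp_combine, hK, hc₁, mul_assoc (s₀ * T * atil), ← Complex.exp_add]
    congr 2
    ring
  have e2 : (∫ z₀ in z..d,
      s₀ * Complex.exp (2 * Complex.I * b * |z - z₀|) *
        (T * Complex.exp (Complex.I * q * z₀)) *
        (atil * Complex.exp (-Complex.I * b * z₀)))
      = K * Complex.exp (-2 * Complex.I * b * z) *
          ((Complex.exp (c₂ * d) - Complex.exp (c₂ * z)) / c₂) := by
    rw [← integral_exp_mul_complex hc₂0, ← intervalIntegral.integral_const_mul]
    apply intervalIntegral.integral_congr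
    intro z₀ hz₀
    rw [Set.uIcc_of_le (by linarith)] at hz₀
    have habs : |z - z₀| = -(z - z₀) := abs_of_nonpos (by have := hz₀.1; linarith)
    simp only [habs]
    push_cast
    rw [exp_combine, hK, hc₂, mul_assoc (s₀ * T * atil), ← Complex.exp_add]
    congr 2
    ring
  rw [e1, e2]
  -- now pure algebra with exponentials
  have hu : Complex.exp (Complex.I * b * z) ≠ 0 := Complex.exp_ne_zero _
  have hx : Complex.exp (Complex.I * q * d) ≠ 0 := Complex.exp_ne_zero _
  have hw : Complex.exp (Complex.I * b * d) ≠ 0 := Complex.exp_ne_zero _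
  have E1 : Complex.exp (c₁ * z) = Complex.exp (Complex.I * q * z) / (Complex.exp (Complex.I * b * z))^3 := by
    rw [eq_div_iff (pow_ne_zero _ hu), ← Complex.exp_nat_mul, ← Complex.exp_add, hc₁]
    congr 1; push_cast; ring
  have E2 : Complex.exp (c₁ * ((-d : ℝ) : ℂ)) = (Complex.exp (Complex.I * b * d))^3 / Complex.exp (Complex.I * q * d) := by
    rw [eq_div_iff hx, ← Complex.exp_nat_mul, ← Complex.exp_add, hc₁]
    congr 1; push_cast; ring
  have E3 : Complex.exp (c₂ * d) = Complex.exp (Complex.I * q * d) * Complex.exp (Complex.I * b * d) := by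
    rw [← Complex.exp_add, hc₂]; congr 1; push_cast; ring
  have E4 : Complex.exp (c₂ * z) = Complex.exp (Complex.I * q * z) * Complex.exp (Complex.I * b * z) := by
    rw [← Complex.exp_add, hc₂]; congr 1; push_cast; ring
  have E5 : Complex.exp (2 * Complex.I * b * z) = (Complex.exp (Complex.I * b * z))^2 := by
    rw [← Complex.exp_nat_mul]; congr 1; push_cast; ring
  have E6 : Complex.exp (-2 * Complex.I * b * z) = ((Complex.exp (Complex.I * b * z))^2)⁻¹ := by
    rw [← Complex.exp_nat_mul, ← Complex.exp_neg]; congr 1; push_cast; ring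
  have E7 : Complex.exp (Complex.I * d * (b + q)) = Complex.exp (Complex.I * q * d) * Complex.exp (Complex.I * b * d) := by
    rw [← Complex.exp_add]; congr 1; push_cast; ring
  have E8 : Complex.exp (Complex.I * d * (3 * b - q)) = (Complex.exp (Complex.I * b * d))^3 / Complex.exp (Complex.I * q * d) := by
    rw [eq_div_iff hx, ← Complex.exp_nat_mul, ← Complex.exp_add]
    congr 1; push_cast; ring
  have E9 : Complex.exp (Complex.I * (q - b) * z) = Complex.exp (Complex.I * q * z) / Complex.exp (Complex.I * b * z) := by
    rw [eq_div_iff hu, ← Complex.exp_add]; congr 1; push_cast; ring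
  have hq3 : ((q : ℂ) - 3 * b) ≠ 0 := by
    intro h; apply hbq2; linear_combination -h
  have hq4 : ((q : ℂ) + b) ≠ 0 := by
    intro h; apply hbq1; linear_combination h
  rw [E1, E2, E3, E4, E5, E6, E7, E8, E9, hc₁, hc₂, hK, div_I_mul, div_I_mul]
  exact alg s₀ T atil b q _ _ _ _ hbq1 hbq2 hq3 hq4 hu hx
end

section
/- Let U be a continuous solution on [−2πδ, 2πδ] of the integral equation U(z) + (iκ²/(2Γ))∫_{−2πδ}^{2πδ} e^{iΓ|z−z₀|}[1 − (ε^{(L)}(z₀) + α|U(z₀)|²)]U(z₀)dz₀ = a·e^{−iΓ(z−2πδ)}, with Γ = κcosφ > 0 and ε^{(L)} continuous. Then U is twice continuously differentiable and satisfies U''(z) + {Γ² − κ²[1 − (ε^{(L)}(z) + α|U(z)|²)]}U(z) = 0 on (−2πδ, 2πδ) together with the boundary conditions iΓU(2πδ) − U'(2πδ) = 2iΓa and iΓU(−2πδ) + U'(−2πδ) = 0. -/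
open Set intervalIntegral

/-- Equivalence (one direction) of the nonlinear integral equation (29) and the semilinear
Sturm–Liouville BVP (65): a continuous solution `U` of the IE is twice continuously
differentiable, satisfies
`U'' + {Γ² − κ²[1 − (ε^{(L)} + α|U|²)]}U = 0` on `(−2πδ, 2πδ)`, and the boundary
conditions `iΓU(2πδ) − U'(2πδ) = 2iΓa`, `iΓU(−2πδ) + U'(−2πδ) = 0`. -/
theorem stmt_19 (δ κ α a φ : ℝ) (hδ : 0 < δ) (hκ : 0 < κ) (hα : 0 < α) (ha : 0 < a)
    (hφ : |φ| < Real.pi / 2) (Γ : ℝ) (hΓ : Γ = κ * Real.cos φ)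
    (εL : ℝ → ℂ)
    (hεL : ContinuousOn εL (Set.Icc (-(2 * Real.pi * δ)) (2 * Real.pi * δ)))
    (U : ℝ → ℂ)
    (hU : ContinuousOn U (Set.Icc (-(2 * Real.pi * δ)) (2 * Real.pi * δ)))
    (hIE : ∀ z ∈ Set.Icc (-(2 * Real.pi * δ)) (2 * Real.pi * δ),
      U z + (Complex.I * κ ^ 2 / (2 * Γ)) *
          ∫ z₀ in (-(2 * Real.pi * δ))..(2 * Real.pi * δ),
            Complex.exp (Complex.I * Γ * |z - z₀|) *
              (1 - (εL z₀ + ((α * ‖U z₀‖ ^ 2 : ℝ) : ℂ))) * U z₀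
        = a * Complex.exp (-Complex.I * Γ * (z - 2 * Real.pi * δ))) :
    ContDiffOn ℝ 2 U (Set.Icc (-(2 * Real.pi * δ)) (2 * Real.pi * δ)) ∧
    (∀ z ∈ Set.Ioo (-(2 * Real.pi * δ)) (2 * Real.pi * δ),
      derivWithin (derivWithin U (Set.Icc (-(2 * Real.pi * δ)) (2 * Real.pi * δ)))
          (Set.Icc (-(2 * Real.pi * δ)) (2 * Real.pi * δ)) z
        + ((Γ ^ 2 : ℂ) - κ ^ 2 * (1 - (εL z + ((α * ‖U z‖ ^ 2 : ℝ) : ℂ)))) * U z = 0) ∧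
    Complex.I * Γ * U (2 * Real.pi * δ)
        - derivWithin U (Set.Icc (-(2 * Real.pi * δ)) (2 * Real.pi * δ)) (2 * Real.pi * δ)
      = 2 * Complex.I * Γ * a ∧
    Complex.I * Γ * U (-(2 * Real.pi * δ))
        + derivWithin U (Set.Icc (-(2 * Real.pi * δ)) (2 * Real.pi * δ)) (-(2 * Real.pi * δ))
      = 0 := by
  have hπ := Real.pi_pos
  set L : ℝ := 2 * Real.pi * δ with hLdef
  have hL : 0 < L := by positivity
  have hm : -L ≤ L := by linarith
  have hΓ0 : 0 < Γ := by
    rw [hΓ]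
    have h := abs_lt.1 hφ
    exact mul_pos hκ (Real.cos_pos_of_mem_Ioo ⟨by linarith [h.1], h.2⟩)
  have hΓne : (Γ : ℂ) ≠ 0 := by exact_mod_cast hΓ0.ne'
  set s : Set ℝ := Set.Icc (-L) L with hsdef
  set c : ℂ := Complex.I * κ ^ 2 / (2 * Γ) with hcdef
  have hcc : c * (2 * (Γ : ℂ)) = Complex.I * (κ : ℂ) ^ 2 := by
    rw [hcdef]; field_simp
  set f : ℝ → ℂ := fun t => (1 - (εL t + ((α * ‖U t‖ ^ 2 : ℝ) : ℂ))) * U t with hfdef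
  have hfc : ContinuousOn f s := by
    apply ContinuousOn.mul _ hU
    apply continuousOn_const.sub
    apply hεL.add
    exact Complex.continuous_ofReal.comp_continuousOn (continuousOn_const.mul (hU.norm.pow 2))
  set g : ℝ → ℂ := Set.IccExtend hm (s.restrict f) with hgdef
  have hg : Continuous g := (hfc.restrict).Icc_extend'
  have hgf : ∀ t ∈ s, g t = f t := fun t ht => Set.IccExtend_of_mem hm _ ht
  set P : ℝ → ℂ := fun z => Complex.exp (Complex.I * Γ * z) with hPdef
  set Q : ℝ → ℂ := fun z => Complex.exp (-(Complex.I * Γ * z)) with hQdef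
  have hPQ : ∀ z, P z * Q z = 1 := by
    intro z
    rw [hPdef, hQdef, ← Complex.exp_add]
    simp
  have hP : ∀ z : ℝ, HasDerivAt P (Complex.I * Γ * P z) z := by
    intro z
    have h1 := (((hasDerivAt_id (z : ℂ)).const_mul (Complex.I * (Γ:ℂ))).cexp).comp_ofReal
    simpa [hPdef, mul_comm] using h1
  have hQ : ∀ z : ℝ, HasDerivAt Q (-(Complex.I * Γ) * Q z) z := by
    intro z
    have h1 := ((((hasDerivAt_id (z : ℂ)).const_mul (Complex.I * (Γ:ℂ))).neg).cexp).comp_ofReal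
    simpa [hQdef, mul_comm] using h1
  set E : ℝ → ℂ := fun z => Complex.exp (-Complex.I * Γ * ((z : ℂ) - L)) with hEdef
  have hE : ∀ z : ℝ, HasDerivAt E (-Complex.I * Γ * E z) z := by
    intro z
    have h1 := ((((hasDerivAt_id (z : ℂ)).sub_const ((L:ℝ):ℂ)).const_mul
      (-Complex.I * (Γ:ℂ))).cexp).comp_ofReal
    simpa [hEdef, mul_comm] using h1
  set F : ℝ → ℂ := fun z => ∫ t in (-L)..z, Q t * g t with hFdef2
  set G : ℝ → ℂ := fun z => ∫ t in z..L, P t * g t with hGdef2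
  have hQgc : Continuous fun t => Q t * g t := by fun_prop
  have hPgc : Continuous fun t => P t * g t := by fun_prop
  have hFd : ∀ z : ℝ, HasDerivAt F (Q z * g z) z := fun z =>
    (hQgc.integral_hasStrictDerivAt (-L) z).hasDerivAt
  have hGd : ∀ z : ℝ, HasDerivAt G (-(P z * g z)) z := fun z =>
    (intervalIntegral.integral_hasStrictDerivAt_left (hPgc.intervalIntegrable _ _)
      (hPgc.stronglyMeasurableAtFilter _ _) hPgc.continuousAt).hasDerivAt
  set V : ℝ → ℂ := fun z => (a : ℂ) * E z - c * (P z * F z + Q z * G z) with hVdef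
  set V₁ : ℝ → ℂ := fun z =>
    (a : ℂ) * (-Complex.I * Γ) * E z - c * (Complex.I * Γ) * (P z * F z - Q z * G z) with hV₁def
  set V₂ : ℝ → ℂ := fun z => -(Γ : ℂ) ^ 2 * V z + (κ : ℂ) ^ 2 * g z with hV₂def
  have hV1 : ∀ z : ℝ, HasDerivAt V (V₁ z) z := by
    intro z
    have h := ((hE z).const_mul (a : ℂ)).sub
      ((((hP z).mul (hFd z)).add ((hQ z).mul (hGd z))).const_mul c)
    refine h.congr_deriv (Eq.symm ?_)
    simp only [hV₁def]
    ring
  have hV2 : ∀ z : ℝ, HasDerivAt V₁ (V₂ z) z := by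
    intro z
    have h := ((hE z).const_mul ((a : ℂ) * (-Complex.I * Γ))).sub
      ((((hP z).mul (hFd z)).sub ((hQ z).mul (hGd z))).const_mul (c * (Complex.I * Γ)))
    refine h.congr_deriv (Eq.symm ?_)
    simp only [hV₂def, hVdef]
    linear_combination (-(a:ℂ) * (Γ:ℂ)^2 * E z + c * (Γ:ℂ)^2 * P z * F z
        + c * (Γ:ℂ)^2 * Q z * G z + (κ:ℂ)^2 * g z) * Complex.I_sq
      + (2 * c * Complex.I * (Γ:ℂ) * g z) * hPQ z
      + (Complex.I * g z) * hcc
  have hUV : ∀ z ∈ s, U z = V z := by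
    intro z hz
    have hz1 : -L ≤ z := hz.1
    have hz2 : z ≤ L := hz.2
    have hsub1 : Set.uIcc (-L) z ⊆ s := by
      rw [Set.uIcc_of_le hz1]; exact Set.Icc_subset_Icc le_rfl hz2
    have hsub2 : Set.uIcc z L ⊆ s := by
      rw [Set.uIcc_of_le hz2]; exact Set.Icc_subset_Icc hz1 le_rfl
    have hWc : ContinuousOn (fun t =>
        Complex.exp (Complex.I * Γ * |z - t|) *
          (1 - (εL t + ((α * ‖U t‖ ^ 2 : ℝ) : ℂ))) * U t) s := by
      apply ContinuousOn.mul _ hU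
      apply ContinuousOn.mul (by fun_prop)
      apply continuousOn_const.sub
      apply hεL.add
      exact Complex.continuous_ofReal.comp_continuousOn (continuousOn_const.mul (hU.norm.pow 2))
    have hi1 := (hWc.mono hsub1).intervalIntegrable (μ := MeasureTheory.volume)
    have hi2 := (hWc.mono hsub2).intervalIntegrable (μ := MeasureTheory.volume)
    have hsplit := intervalIntegral.integral_add_adjacent_intervals hi1 hi2
    have hpiece1 : (∫ t in (-L)..z,
        Complex.exp (Complex.I * Γ * |z - t|) *
          (1 - (εL t + ((α * ‖U t‖ ^ 2 : ℝ) : ℂ))) * U t) = P z * F z := by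
      rw [show P z * F z = ∫ t in (-L)..z, P z * (Q t * g t) from
        (intervalIntegral.integral_const_mul _ _).symm]
      apply intervalIntegral.integral_congr
      intro t ht
      have hts : t ∈ s := hsub1 ht
      have htz : t ≤ z := (Set.uIcc_of_le hz1 ▸ ht).2
      beta_reduce
      rw [hgf t hts, abs_of_nonneg (show (0:ℝ) ≤ z - t by linarith),
        show Complex.I * (Γ:ℂ) * ((z - t : ℝ) : ℂ)
          = Complex.I * Γ * (z:ℝ) + -(Complex.I * Γ * (t:ℝ)) by push_cast; ring,
        Complex.exp_add]
      simp only [hPdef, hQdef, hfdef]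
      ring
    have hpiece2 : (∫ t in z..L,
        Complex.exp (Complex.I * Γ * |z - t|) *
          (1 - (εL t + ((α * ‖U t‖ ^ 2 : ℝ) : ℂ))) * U t) = Q z * G z := by
      rw [show Q z * G z = ∫ t in z..L, Q z * (P t * g t) from
        (intervalIntegral.integral_const_mul _ _).symm]
      apply intervalIntegral.integral_congr
      intro t ht
      have hts : t ∈ s := hsub2 ht
      have htz : z ≤ t := (Set.uIcc_of_le hz2 ▸ ht).1
      beta_reduce
      rw [hgf t hts, abs_of_nonpos (show z - t ≤ (0:ℝ) by linarith),
        show Complex.I * (Γ:ℂ) * ((-(z - t) : ℝ) : ℂ)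
          = -(Complex.I * Γ * (z:ℝ)) + Complex.I * Γ * (t:ℝ) by push_cast; ring,
        Complex.exp_add]
      simp only [hPdef, hQdef, hfdef]
      ring
    have h := hIE z hz
    rw [← hsplit, hpiece1, hpiece2] at h
    have hLc : ((L : ℝ) : ℂ) = 2 * (Real.pi : ℂ) * (δ : ℂ) := by push_cast [hLdef]; ring
    have hE' : (a : ℂ) * Complex.exp (-Complex.I * Γ * ((z:ℂ) - 2 * Real.pi * δ)) = a * E z := by
      rw [hEdef, hLc]
    rw [hE'] at h
    simp only [hVdef]
    linear_combination h
  have hsud : UniqueDiffOn ℝ s := uniqueDiffOn_Icc (by linarith)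
  have hdW : ∀ z ∈ s, derivWithin U s z = V₁ z := by
    intro z hz
    rw [derivWithin_congr hUV (hUV z hz)]
    exact ((hV1 z).hasDerivWithinAt).derivWithin (hsud z hz)
  refine ⟨?_, ?_, ?_, ?_⟩
  · have hCD : ContDiff ℝ 2 V := by
      have hVc : Continuous V := Differentiable.continuous fun z => (hV1 z).differentiableAt
      rw [show (2 : WithTop ℕ∞) = 1 + 1 by norm_num, contDiff_succ_iff_deriv]
      refine ⟨fun z => (hV1 z).differentiableAt, by simp, ?_⟩
      rw [show deriv V = V₁ from funext fun z => (hV1 z).deriv, contDiff_one_iff_deriv]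
      refine ⟨fun z => (hV2 z).differentiableAt, ?_⟩
      rw [show deriv V₁ = V₂ from funext fun z => (hV2 z).deriv]
      simp only [hV₂def]
      exact (continuous_const.mul hVc).add (continuous_const.mul hg)
    exact hCD.contDiffOn.congr hUV
  · intro z hz
    have hzs : z ∈ s := Set.mem_Icc.2 ⟨hz.1.le, hz.2.le⟩
    rw [derivWithin_congr hdW (hdW z hzs)]
    rw [((hV2 z).hasDerivWithinAt).derivWithin (hsud z hzs)]
    simp only [hV₂def]
    rw [hgf z hzs, ← hUV z hzs]
    simp only [hfdef]
    ring
  · have hLs : L ∈ s := Set.right_mem_Icc.2 hm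
    rw [hUV L hLs, hdW L hLs]
    have hGL : G L = 0 := intervalIntegral.integral_same
    have hEL : E L = 1 := by simp [hEdef]
    simp only [hVdef, hV₁def, hGL, hEL]
    ring
  · have hLs : -L ∈ s := Set.left_mem_Icc.2 hm
    rw [hUV (-L) hLs, hdW (-L) hLs]
    have hF0 : F (-L) = 0 := intervalIntegral.integral_same
    simp only [hVdef, hV₁def, hF0]
    push_cast
    ring
end
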